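/- If m : [0,𝒯]×[0,𝒰] → (0,∞) is continuous and Lebesgue-integrable and multiplicatively separable, i.e. m(s,u) = m̄₁(s)·m̄₂(u) for some functions m̄₁ : [0,𝒯] → (0,∞) and m̄₂ : [0,𝒰] → (0,∞), then for every t ∈ (0,𝒯): [∫_0^{min(t,𝒰)} m(𝒯−t,u) du] · [∫_t^𝒯 ∫_0^𝒰 m(𝒯−s,u) du ds] = [∫_0^𝒰 m(𝒯−t,u) du] · [∫_t^𝒯 ∫_0^{min(t,𝒰)} m(𝒯−s,u) du ds]. -/
import Mathlib


open MeasureTheory Filter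

/-- key integral identity in the proof of Proposition 1: if
`m : [0,𝒯]×[0,𝒰] → (0,∞)` is continuous, Lebesgue-integrable and multiplicatively
separable, `m(s,u) = m₁(s) m₂(u)` with `m₁, m₂ > 0`, then for every `t ∈ (0,𝒯)`,
`(∫_0^{min(t,𝒰)} m(𝒯−t,u) du)(∫_t^𝒯 ∫_0^𝒰 m(𝒯−s,u) du ds)
  = (∫_0^𝒰 m(𝒯−t,u) du)(∫_t^𝒯 ∫_0^{min(t,𝒰)} m(𝒯−s,u) du ds)`,
i.e. truncating the `u`-integration to `[0,t]` does not change the cost-weighted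
reverse hazard ratio. -/
theorem statement2 (𝒯 𝒰 : ℝ) (hT : 0 < 𝒯) (hU : 0 < 𝒰) (hUT : 𝒰 ≤ 𝒯)
    (m : ℝ → ℝ → ℝ) (m₁ m₂ : ℝ → ℝ)
    (hmcont : ContinuousOn (fun p : ℝ × ℝ => m p.1 p.2) (Set.Icc 0 𝒯 ×ˢ Set.Icc 0 𝒰))
    (hmint : IntegrableOn (fun p : ℝ × ℝ => m p.1 p.2) (Set.Icc 0 𝒯 ×ˢ Set.Icc 0 𝒰) volume)
    (hmpos : ∀ s ∈ Set.Icc (0:ℝ) 𝒯, ∀ u ∈ Set.Icc (0:ℝ) 𝒰, 0 < m s u)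
    (hm₁pos : ∀ s ∈ Set.Icc (0:ℝ) 𝒯, 0 < m₁ s)
    (hm₂pos : ∀ u ∈ Set.Icc (0:ℝ) 𝒰, 0 < m₂ u)
    (hsep : ∀ s ∈ Set.Icc (0:ℝ) 𝒯, ∀ u ∈ Set.Icc (0:ℝ) 𝒰, m s u = m₁ s * m₂ u)
    (t : ℝ) (ht : t ∈ Set.Ioo (0:ℝ) 𝒯) :
    (∫ u in (0:ℝ)..min t 𝒰, m (𝒯 - t) u) *
        (∫ s in t..𝒯, ∫ u in (0:ℝ)..𝒰, m (𝒯 - s) u) =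
      (∫ u in (0:ℝ)..𝒰, m (𝒯 - t) u) *
        (∫ s in t..𝒯, ∫ u in (0:ℝ)..min t 𝒰, m (𝒯 - s) u) := by
  obtain ⟨ht0, htT⟩ := ht
  have hc : ∀ c, 0 ≤ c → c ≤ 𝒰 → ∀ s ∈ Set.Icc (0:ℝ) 𝒯,
      (∫ u in (0:ℝ)..c, m s u) = m₁ s * ∫ u in (0:ℝ)..c, m₂ u := by
    intro c hc0 hcU s hs
    rw [← intervalIntegral.integral_const_mul]
    apply intervalIntegral.integral_congr
    intro u hu
    rw [Set.uIcc_of_le hc0] at hu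
    exact hsep s hs u ⟨hu.1, hu.2.trans hcU⟩
  have hmin0 : (0:ℝ) ≤ min t 𝒰 := le_min ht0.le hU.le
  have hminU : min t 𝒰 ≤ 𝒰 := min_le_right _ _
  have hTt : 𝒯 - t ∈ Set.Icc (0:ℝ) 𝒯 := ⟨by linarith, by linarith⟩
  have hmem : ∀ s ∈ Set.uIcc t 𝒯, 𝒯 - s ∈ Set.Icc (0:ℝ) 𝒯 := by
    intro s hs
    rw [Set.uIcc_of_le htT.le] at hs
    exact ⟨by linarith [hs.2], by linarith [hs.1]⟩
  rw [hc _ hmin0 hminU _ hTt, hc _ hU.le le_rfl _ hTt]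
  rw [intervalIntegral.integral_congr (g := fun s => m₁ (𝒯 - s) * ∫ u in (0:ℝ)..𝒰, m₂ u)
      (fun s hs => hc _ hU.le le_rfl _ (hmem s hs)),
    intervalIntegral.integral_congr (g := fun s => m₁ (𝒯 - s) * ∫ u in (0:ℝ)..min t 𝒰, m₂ u)
      (fun s hs => hc _ hmin0 hminU _ (hmem s hs))]
  rw [intervalIntegral.integral_mul_const, intervalIntegral.integral_mul_const]
  ring
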